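/- Let c > 0 and define F : (0,1) → ℝ by F(x) = 4x(3 + x²)/(3 + 6x² − x⁴) + 8c(3 − x²)x/((1 − x²)(3 + 6x² − x⁴)). Then F is continuous and positive on (0,1), F(x) → 0 as x → 0⁺, and F(x) → +∞ as x → 1⁻. Consequently, for every integer m ≥ 1 there exists x₁ ∈ (0,1) with F(x₁) = m. -/

import Mathlib

open Filter Set

theorem stmt_13 (c : ℝ) (hc : 0 < c)
    (F : ℝ → ℝ)
    (hF : ∀ x : ℝ, F x = 4*x*(3 + x^2)/(3 + 6*x^2 - x^4)
        + 8*c*(3 - x^2)*x/((1 - x^2)*(3 + 6*x^2 - x^4))) :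
    ContinuousOn F (Set.Ioo (0:ℝ) 1) ∧
    (∀ x ∈ Set.Ioo (0:ℝ) 1, 0 < F x) ∧
    Filter.Tendsto F (nhdsWithin 0 (Set.Ioo (0:ℝ) 1)) (nhds 0) ∧
    Filter.Tendsto F (nhdsWithin 1 (Set.Ioo (0:ℝ) 1)) Filter.atTop ∧
    (∀ m : ℕ, 1 ≤ m → ∃ x₁ ∈ Set.Ioo (0:ℝ) 1, F x₁ = m) := by
  have hFe : F = fun x => 4*x*(3 + x^2)/(3 + 6*x^2 - x^4)
        + 8*c*(3 - x^2)*x/((1 - x^2)*(3 + 6*x^2 - x^4)) := funext hF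
  have hd1 : ∀ x ∈ Set.Ioo (0:ℝ) 1, 0 < 3 + 6*x^2 - x^4 := by
    rintro x ⟨hx0, hx1⟩
    have hx2 : x^2 < 1 := by nlinarith
    nlinarith [sq_nonneg x, hx2]
  have hd2 : ∀ x ∈ Set.Ioo (0:ℝ) 1, 0 < (1 - x^2)*(3 + 6*x^2 - x^4) := by
    rintro x ⟨hx0, hx1⟩
    have hx2 : x^2 < 1 := by nlinarith
    exact mul_pos (by linarith) (hd1 x ⟨hx0, hx1⟩)
  have hcont : ContinuousOn F (Set.Ioo (0:ℝ) 1) := by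
    rw [hFe]
    apply ContinuousOn.add
    · exact ContinuousOn.div (by fun_prop) (by fun_prop)
        (fun x hx => (hd1 x hx).ne')
    · exact ContinuousOn.div (by fun_prop) (by fun_prop)
        (fun x hx => (hd2 x hx).ne')
  have hpos : ∀ x ∈ Set.Ioo (0:ℝ) 1, 0 < F x := by
    rintro x ⟨hx0, hx1⟩
    rw [hF x]
    have h1 := hd1 x ⟨hx0, hx1⟩
    have h2 := hd2 x ⟨hx0, hx1⟩
    have hx2 : x^2 < 1 := by nlinarith
    apply add_pos
    · exact div_pos (by nlinarith) h1
    · refine div_pos ?_ h2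
      have h3 : (0:ℝ) < 3 - x^2 := by linarith
      nlinarith [mul_pos (mul_pos hc hx0) h3]
  have h0 : Tendsto F (nhdsWithin 0 (Set.Ioo (0:ℝ) 1)) (nhds 0) := by
    have hca : ContinuousAt F 0 := by
      rw [hFe]
      apply ContinuousAt.add
      · exact ContinuousAt.div (by fun_prop) (by fun_prop) (by norm_num)
      · exact ContinuousAt.div (by fun_prop) (by fun_prop) (by norm_num)
    have hF0 : F 0 = 0 := by rw [hF]; norm_num
    have := hca.tendsto.mono_left (nhdsWithin_le_nhds (s := Set.Ioo (0:ℝ) 1))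
    rwa [hF0] at this
  have htop : Tendsto F (nhdsWithin 1 (Set.Ioo (0:ℝ) 1)) Filter.atTop := by
    have hg : Tendsto (fun x : ℝ => 4*x*(3 + x^2)/(3 + 6*x^2 - x^4))
        (nhdsWithin 1 (Set.Ioo (0:ℝ) 1)) (nhds 2) := by
      have hca : ContinuousAt (fun x : ℝ => 4*x*(3 + x^2)/(3 + 6*x^2 - x^4)) 1 :=
        ContinuousAt.div (by fun_prop) (by fun_prop) (by norm_num)
      have := hca.tendsto.mono_left (nhdsWithin_le_nhds (s := Set.Ioo (0:ℝ) 1))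
      convert this using 2
      norm_num
    have hh2 : Tendsto (fun x : ℝ => 8*c*(3 - x^2)*x/(3 + 6*x^2 - x^4))
        (nhdsWithin 1 (Set.Ioo (0:ℝ) 1)) (nhds (2*c)) := by
      have hca : ContinuousAt (fun x : ℝ => 8*c*(3 - x^2)*x/(3 + 6*x^2 - x^4)) 1 :=
        ContinuousAt.div (by fun_prop) (by fun_prop) (by norm_num)
      have := hca.tendsto.mono_left (nhdsWithin_le_nhds (s := Set.Ioo (0:ℝ) 1))
      convert this using 2
      norm_num; ring
    have hh3 : Tendsto (fun x : ℝ => (1 - x^2)⁻¹)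
        (nhdsWithin 1 (Set.Ioo (0:ℝ) 1)) Filter.atTop := by
      apply Filter.Tendsto.inv_tendsto_nhdsGT_zero
      rw [tendsto_nhdsWithin_iff]
      constructor
      · have hca : ContinuousAt (fun x : ℝ => 1 - x^2) 1 := by fun_prop
        have := hca.tendsto.mono_left (nhdsWithin_le_nhds (s := Set.Ioo (0:ℝ) 1))
        convert this using 2
        norm_num
      · filter_upwards [self_mem_nhdsWithin] with x hx
        rcases hx with ⟨hx0, hx1⟩
        have : x^2 < 1 := by nlinarith
        simp only [Set.mem_Ioi]; linarith
    have hH : Tendsto (fun x : ℝ => (8*c*(3 - x^2)*x/(3 + 6*x^2 - x^4)) * (1 - x^2)⁻¹)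
        (nhdsWithin 1 (Set.Ioo (0:ℝ) 1)) Filter.atTop :=
      hh2.pos_mul_atTop (by linarith) hh3
    have hsum := hg.add_atTop hH
    apply hsum.congr'
    filter_upwards [self_mem_nhdsWithin] with x hx
    have h1 := (hd1 x hx).ne'
    have h2 : (1 - x^2) ≠ 0 := by
      rcases hx with ⟨hx0, hx1⟩; nlinarith
    rw [hF x]
    field_simp
  refine ⟨hcont, hpos, h0, htop, ?_⟩
  intro m hm
  have hne0 : (nhdsWithin (0:ℝ) (Set.Ioo (0:ℝ) 1)).NeBot := by
    rw [← mem_closure_iff_nhdsWithin_neBot, closure_Ioo (by norm_num : (0:ℝ) ≠ 1)]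
    exact ⟨le_refl _, by norm_num⟩
  have hne1 : (nhdsWithin (1:ℝ) (Set.Ioo (0:ℝ) 1)).NeBot := by
    rw [← mem_closure_iff_nhdsWithin_neBot, closure_Ioo (by norm_num : (0:ℝ) ≠ 1)]
    exact ⟨by norm_num, le_refl _⟩
  have hA : ∀ᶠ x in nhdsWithin (0:ℝ) (Set.Ioo 0 1), F x < 1 :=
    h0.eventually (eventually_lt_nhds (by norm_num))
  obtain ⟨a, haF, ha⟩ := (hA.and self_mem_nhdsWithin).exists
  have hB : ∀ᶠ x in nhdsWithin (1:ℝ) (Set.Ioo 0 1), (m:ℝ) < F x :=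
    htop.eventually (eventually_gt_atTop _)
  have hB2 : ∀ᶠ x in nhdsWithin (1:ℝ) (Set.Ioo 0 1), a < x :=
    (eventually_gt_nhds ha.2).filter_mono (nhdsWithin_le_nhds (s := Set.Ioo (0:ℝ) 1))
  obtain ⟨b, ⟨hbF, hb⟩, hab⟩ := ((hB.and self_mem_nhdsWithin).and hB2).exists
  have hsub : Set.Icc a b ⊆ Set.Ioo (0:ℝ) 1 := fun y hy =>
    ⟨lt_of_lt_of_le ha.1 hy.1, lt_of_le_of_lt hy.2 hb.2⟩
  have hmem : (m:ℝ) ∈ Set.Icc (F a) (F b) := by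
    constructor
    · have : (1:ℝ) ≤ m := by exact_mod_cast hm
      linarith
    · linarith
  obtain ⟨x, hx, hfx⟩ := intermediate_value_Icc hab.le (hcont.mono hsub) hmem
  exact ⟨x, hsub hx, hfx⟩
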